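/- Let D ≥ 3 be an integer, g_c := D^D/(D+1)^{D+1}, and define G_NLO(g) := (D(D+1)/2)·g²·G_LO(g)^{2D+2} / ((2 − G_LO(g))·(1 − g·D·G_LO(g)^{D+1})) for 0 ≤ g < g_c, where G_LO(g) is the unique solution G ∈ [1, (D+1)/D] of G = 1 + g·G^{D+1}. Then G_NLO is real-analytic on a neighbourhood of 0, all coefficients of its Taylor series at 0 are nonnegative, and the radius of convergence of this Taylor series is exactly g_c; i.e., the next-to-leading-order series has the same radius of convergence as the leading-order melonic series. -/

import Mathlib

open PowerSeries Finset

namespace NLOaux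

noncomputable section

/-! ### Nonnegative-coefficient power series -/

def Pos (f : PowerSeries ℝ) : Prop := ∀ n, 0 ≤ coeff n f

lemma Pos.one : Pos 1 := by
  intro n; rw [coeff_one]; split <;> norm_num

lemma Pos.Xp : Pos (X : PowerSeries ℝ) := by
  intro n; rw [coeff_X]; split <;> norm_num

lemma Pos.Cp {c : ℝ} (hc : 0 ≤ c) : Pos (C c) := by
  intro n; rw [coeff_C]; split <;> simp [hc]

lemma Pos.mul {f g : PowerSeries ℝ} (hf : Pos f) (hg : Pos g) : Pos (f * g) := by
  intro n; rw [coeff_mul]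
  exact Finset.sum_nonneg fun p _ => mul_nonneg (hf p.1) (hg p.2)

lemma Pos.pow {f : PowerSeries ℝ} (hf : Pos f) (m : ℕ) : Pos (f ^ m) := by
  induction m with
  | zero => simpa using Pos.one
  | succ m ih => rw [pow_succ]; exact ih.mul hf

lemma coeff_mul_congr {f g f' g' : PowerSeries ℝ} {n : ℕ}
    (hf : ∀ i ≤ n, coeff i f = coeff i f')
    (hg : ∀ i ≤ n, coeff i g = coeff i g') :
    coeff n (f * g) = coeff n (f' * g') := by
  rw [coeff_mul, coeff_mul]
  refine Finset.sum_congr rfl fun p hp => ?_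
  rw [Finset.HasAntidiagonal.mem_antidiagonal] at hp
  rw [hf _ (by omega), hg _ (by omega)]

lemma coeff_pow_congr {f g : PowerSeries ℝ} {n : ℕ} (m : ℕ)
    (hf : ∀ i ≤ n, coeff i f = coeff i g) :
    ∀ i ≤ n, coeff i (f ^ m) = coeff i (g ^ m) := by
  induction m with
  | zero => intro i _; rfl
  | succ m ih =>
      intro i hi
      rw [pow_succ, pow_succ]
      exact coeff_mul_congr (fun j hj => ih j (le_trans hj hi))
        (fun j hj => hf j (le_trans hj hi))

/-! ### The melonic series `A` as a limit of truncations -/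

variable {D : ℕ}

def F (D : ℕ) : ℕ → PowerSeries ℝ
  | 0 => 1
  | (k+1) => 1 + X * (F D k) ^ (D + 1)

lemma coeff_F_succ (k : ℕ) : ∀ i ≤ k, coeff i (F D (k+1)) = coeff i (F D k) := by
  induction k with
  | zero =>
      intro i hi
      interval_cases i
      simp [F, coeff_one]
  | succ k ih =>
      intro i hi
      show coeff i (1 + X * (F D (k+1)) ^ (D+1)) = coeff i (1 + X * (F D k) ^ (D+1))
      cases i with
      | zero => simp
      | succ j =>
          rw [map_add, map_add, coeff_succ_X_mul, coeff_succ_X_mul]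
          congr 1
          exact coeff_pow_congr (D+1) (fun m hm => ih m (by omega)) j le_rfl

lemma coeff_F_stab {k l : ℕ} (h : k ≤ l) {i : ℕ} (hi : i ≤ k) :
    coeff i (F D k) = coeff i (F D l) := by
  induction l with
  | zero => have : k = 0 := by omega
            subst this; rfl
  | succ l ih =>
      rcases Nat.lt_or_ge k (l+1) with hk | hk
      · rw [ih (by omega), coeff_F_succ l i (by omega)]
      · have : k = l + 1 := by omega
        subst this; rfl

def A (D : ℕ) : PowerSeries ℝ := PowerSeries.mk (fun n => coeff n (F D n))

lemma coeff_A_eq {i k : ℕ} (h : i ≤ k) : coeff i (A D) = coeff i (F D k) := by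
  rw [A, coeff_mk]; exact coeff_F_stab h le_rfl

lemma A_fixed : A D = 1 + X * (A D) ^ (D + 1) := by
  ext n
  cases n with
  | zero => simp [A, F, coeff_one]
  | succ m =>
      rw [coeff_A_eq (le_refl (m+1))]
      show coeff (m+1) (1 + X * (F D m) ^ (D+1)) = _
      rw [map_add, map_add, coeff_succ_X_mul, coeff_succ_X_mul]
      congr 1
      exact (coeff_pow_congr (D+1) (fun j hj => (coeff_A_eq hj : _)) m le_rfl).symm

lemma Pos.Fp : ∀ k, Pos (F D k) := by
  intro k
  induction k with
  | zero => exact Pos.one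
  | succ k ih =>
      show Pos (1 + X * (F D k) ^ (D+1))
      intro n
      rw [map_add]
      exact add_nonneg (Pos.one n) ((Pos.Xp.mul (ih.pow (D+1))) n)

lemma Pos.Ap : Pos (A D) := fun n => by
  rw [coeff_A_eq le_rfl]; exact Pos.Fp n n

lemma coeff_A_zero : coeff 0 (A D) = 1 := by
  rw [coeff_A_eq (le_refl 0)]; simp [F, coeff_one]

lemma conv_partial_le {f g : PowerSeries ℝ} (hf : Pos f) (hg : Pos g) {x : ℝ} (hx : 0 ≤ x)
    (N : ℕ) :
    ∑ n ∈ range N, coeff n (f * g) * x ^ n ≤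
      (∑ n ∈ range N, coeff n f * x ^ n) * (∑ n ∈ range N, coeff n g * x ^ n) := by
  have key : ∀ n, coeff n (f * g) * x ^ n =
      ∑ p ∈ antidiagonal n, (coeff p.1 f * x ^ p.1) * (coeff p.2 g * x ^ p.2) := by
    intro n
    rw [coeff_mul, Finset.sum_mul]
    refine Finset.sum_congr rfl fun p hp => ?_
    rw [Finset.HasAntidiagonal.mem_antidiagonal] at hp
    rw [← hp, pow_add]; ring
  simp_rw [key]
  rw [Finset.sum_mul_sum]
  rw [← Finset.sum_biUnion]
  · rw [← Finset.sum_product']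
    refine Finset.sum_le_sum_of_subset_of_nonneg ?_ ?_
    · intro p hp
      rw [Finset.mem_biUnion] at hp
      obtain ⟨n, hn, hpn⟩ := hp
      rw [Finset.HasAntidiagonal.mem_antidiagonal] at hpn
      rw [Finset.mem_range] at hn
      rw [Finset.mem_product, Finset.mem_range, Finset.mem_range]
      omega
    · intro p _ _
      exact mul_nonneg (mul_nonneg (hf p.1) (pow_nonneg hx _))
        (mul_nonneg (hg p.2) (pow_nonneg hx _))
  · intro m _ n _ hmn
    simp only [Finset.disjoint_left]
    intro p hpm hpn
    rw [Finset.HasAntidiagonal.mem_antidiagonal] at hpm hpn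
    exact hmn (hpm ▸ hpn)


def Ev (f : PowerSeries ℝ) (x L : ℝ) : Prop :=
  Summable (fun n => ‖coeff n f * x ^ n‖) ∧ HasSum (fun n => coeff n f * x ^ n) L

lemma Ev.summable {f : PowerSeries ℝ} {x L : ℝ} (h : Ev f x L) :
    Summable fun n => coeff n f * x ^ n := h.1.of_norm

lemma Ev.mul {f g : PowerSeries ℝ} {x L M : ℝ} (hf : Ev f x L) (hg : Ev g x M) :
    Ev (f * g) x (L * M) := by
  obtain ⟨hf1, hf2⟩ := hf
  obtain ⟨hg1, hg2⟩ := hg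
  have key : ∀ n, coeff n (f * g) * x ^ n =
      ∑ p ∈ antidiagonal n, (coeff p.1 f * x ^ p.1) * (coeff p.2 g * x ^ p.2) := by
    intro n
    rw [coeff_mul, Finset.sum_mul]
    refine Finset.sum_congr rfl fun p hp => ?_
    rw [Finset.HasAntidiagonal.mem_antidiagonal] at hp
    rw [← hp, pow_add]; ring
  have hnorm := summable_norm_sum_mul_antidiagonal_of_summable_norm hf1 hg1
  have htsum := tsum_mul_tsum_eq_tsum_sum_antidiagonal_of_summable_norm hf1 hg1
  have h2 : Summable fun n => ‖coeff n (f * g) * x ^ n‖ := by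
    refine hnorm.congr fun n => ?_
    simp [key n]
  refine ⟨h2, ?_⟩
  have h4 : (∑' n, coeff n (f * g) * x ^ n) = L * M := by
    rw [tsum_congr key, ← htsum, hf2.tsum_eq, hg2.tsum_eq]
  exact h4 ▸ h2.of_norm.hasSum

lemma Ev.of_ite {f : PowerSeries ℝ} {x c : ℝ} (k : ℕ)
    (h : ∀ n, coeff n f * x ^ n = if n = k then c else 0) : Ev f x c := by
  have he : (fun n => coeff n f * x ^ n) = (fun n => if n = k then c else 0) := funext h
  constructor
  · apply summable_of_ne_finset_zero (s := {k})
    intro n hn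
    simp only [Finset.mem_singleton] at hn
    rw [h n, if_neg hn, norm_zero]
  · rw [he]; exact hasSum_ite_eq k c

lemma Ev.one {x : ℝ} : Ev 1 x 1 :=
  Ev.of_ite 0 (by intro n; rw [coeff_one]; split <;> simp_all)

lemma Ev.Xe {x : ℝ} : Ev X x x :=
  Ev.of_ite 1 (by intro n; rw [coeff_X]; split <;> simp_all)

lemma Ev.Ce {c x : ℝ} : Ev (C c) x c :=
  Ev.of_ite 0 (by intro n; rw [coeff_C]; split <;> simp_all)

lemma Ev.pow {f : PowerSeries ℝ} {x L : ℝ} (hf : Ev f x L) (m : ℕ) : Ev (f ^ m) x (L ^ m) := by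
  induction m with
  | zero => simpa using Ev.one
  | succ m ih => rw [pow_succ, pow_succ]; exact Ev.mul ih hf

lemma Ev.add {f g : PowerSeries ℝ} {x L M : ℝ} (hf : Ev f x L) (hg : Ev g x M) :
    Ev (f + g) x (L + M) := by
  constructor
  · refine Summable.of_nonneg_of_le (fun n => norm_nonneg _) (fun n => ?_) (hf.1.add hg.1)
    rw [map_add, add_mul]
    exact norm_add_le _ _
  · have := hf.2.add hg.2
    simpa [map_add, add_mul] using this

lemma Ev.sub {f g : PowerSeries ℝ} {x L M : ℝ} (hf : Ev f x L) (hg : Ev g x M) :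
    Ev (f - g) x (L - M) := by
  constructor
  · refine Summable.of_nonneg_of_le (fun n => norm_nonneg _) (fun n => ?_) (hf.1.add hg.1)
    rw [map_sub, sub_mul]
    exact norm_sub_le _ _
  · have := hf.2.sub hg.2
    simpa [map_sub, sub_mul] using this

lemma Ev.unique {f : PowerSeries ℝ} {x L M : ℝ} (hf : Ev f x L) (hg : Ev f x M) : L = M :=
  hf.2.unique hg.2


lemma pow_partial_le {f : PowerSeries ℝ} (hf : Pos f) {x : ℝ} (hx : 0 ≤ x) (m N : ℕ) :
    ∑ n ∈ range N, coeff n (f ^ m) * x ^ n ≤ (∑ n ∈ range N, coeff n f * x ^ n) ^ m := by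
  induction m with
  | zero =>
      simp only [pow_zero]
      calc ∑ n ∈ range N, coeff n (1 : PowerSeries ℝ) * x ^ n
          = ∑ n ∈ range N, if n = 0 then x ^ n else 0 := by
            refine Finset.sum_congr rfl fun n _ => ?_
            rw [coeff_one]; split <;> simp
        _ ≤ 1 := by
            rw [Finset.sum_ite_eq' (range N) 0 (fun n => x ^ n)]
            split <;> norm_num
  | succ m ih =>
      rw [pow_succ, pow_succ]
      calc ∑ n ∈ range N, coeff n (f ^ m * f) * x ^ n
          ≤ (∑ n ∈ range N, coeff n (f ^ m) * x ^ n) * (∑ n ∈ range N, coeff n f * x ^ n) :=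
            conv_partial_le (hf.pow m) hf hx N
        _ ≤ _ := by
            refine mul_le_mul_of_nonneg_right ih ?_
            exact Finset.sum_nonneg fun n _ => mul_nonneg (hf n) (pow_nonneg hx n)

lemma A_partial_le {x : ℝ} (hx : 0 ≤ x) {G : ℝ} (hG1 : 1 ≤ G) (hGe : G = 1 + x * G ^ (D + 1)) :
    ∀ N, ∑ n ∈ range N, coeff n (A D) * x ^ n ≤ G := by
  intro N
  induction N with
  | zero => simpa using le_trans zero_le_one hG1
  | succ N ih =>
      rw [Finset.sum_range_succ']
      have h0 : coeff 0 (A D) * x ^ 0 = 1 := by rw [coeff_A_zero]; simp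
      have hstep : ∀ i : ℕ, coeff (i+1) (A D) = coeff i ((A D) ^ (D+1)) := by
        intro i
        conv_lhs => rw [A_fixed]
        rw [map_add, coeff_succ_X_mul]
        simp [coeff_one]
      have hsum : ∑ i ∈ range N, coeff (i+1) (A D) * x ^ (i+1)
          = x * ∑ i ∈ range N, coeff i ((A D) ^ (D+1)) * x ^ i := by
        rw [Finset.mul_sum]
        refine Finset.sum_congr rfl fun i _ => ?_
        rw [hstep i, pow_succ]
        ring
      rw [hsum, h0]
      have h2 : ∑ i ∈ range N, coeff i ((A D) ^ (D+1)) * x ^ i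
          ≤ (∑ i ∈ range N, coeff i (A D) * x ^ i) ^ (D+1) := pow_partial_le Pos.Ap hx _ N
      have hnn : 0 ≤ ∑ i ∈ range N, coeff i (A D) * x ^ i :=
        Finset.sum_nonneg fun n _ => mul_nonneg (Pos.Ap n) (pow_nonneg hx n)
      have h3 : (∑ i ∈ range N, coeff i (A D) * x ^ i) ^ (D+1) ≤ G ^ (D+1) :=
        pow_le_pow_left₀ hnn ih _
      nlinarith [mul_le_mul_of_nonneg_left (h2.trans h3) hx]

lemma Ev_pos_of_summable {f : PowerSeries ℝ} (hf : Pos f) {x : ℝ} (hx : 0 ≤ x)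
    (hs : Summable fun n => coeff n f * x ^ n) :
    Ev f x (∑' n, coeff n f * x ^ n) :=
  ⟨hs.abs.congr fun n => (Real.norm_eq_abs _).symm, hs.hasSum⟩

lemma Ev_A {x : ℝ} (hx : 0 ≤ x) {G : ℝ} (hG1 : 1 ≤ G) (hGe : G = 1 + x * G ^ (D + 1)) :
    ∃ L, Ev (A D) x L ∧ 1 ≤ L ∧ L ≤ G ∧ L = 1 + x * L ^ (D + 1) := by
  have hnn : ∀ n : ℕ, 0 ≤ coeff n (A D) * x ^ n :=
    fun n => mul_nonneg (Pos.Ap n) (pow_nonneg hx n)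
  have hsum : Summable fun n => coeff n (A D) * x ^ n :=
    summable_of_sum_range_le hnn (A_partial_le hx hG1 hGe)
  refine ⟨∑' n, coeff n (A D) * x ^ n, Ev_pos_of_summable Pos.Ap hx hsum, ?_, ?_, ?_⟩
  · have h1 := Summable.sum_le_tsum (range 1) (fun n _ => hnn n) hsum
    simpa [coeff_A_zero] using h1
  · exact Summable.tsum_le_of_sum_range_le hsum (A_partial_le hx hG1 hGe)
  · have hEv : Ev (A D) x (∑' n, coeff n (A D) * x ^ n) := Ev_pos_of_summable Pos.Ap hx hsum
    have hEv2 := (Ev.one (x := x)).add (Ev.Xe.mul (hEv.pow (D+1)))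
    rw [← A_fixed] at hEv2
    exact hEv.unique hEv2


lemma le_coeff_mul {f g : PowerSeries ℝ} (hf : Pos f) (hg : Pos g)
    (h1 : (1:ℝ) ≤ coeff 0 g) : ∀ n, coeff n f ≤ coeff n (f * g) := by
  intro n
  rw [coeff_mul]
  have hmem : ((n, 0) : ℕ × ℕ) ∈ antidiagonal n := by simp
  calc coeff n f ≤ coeff n f * coeff 0 g := le_mul_of_one_le_right (hf n) h1
    _ ≤ _ := Finset.single_le_sum (f := fun p : ℕ × ℕ => coeff p.1 f * coeff p.2 g)
        (fun p _ => mul_nonneg (hf p.1) (hg p.2)) hmem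

lemma geom_Ev {w : PowerSeries ℝ} (hw : Pos w) (h0 : coeff 0 w = 0)
    {x s : ℝ} (hx : 0 ≤ x) (hEw : Ev w x s) (hs : s < 1) :
    Pos (1 - w)⁻¹ ∧ Ev (1 - w)⁻¹ x (1/(1-s)) ∧ coeff 0 (1 - w)⁻¹ = 1 := by
  have hs0 : 0 ≤ s := by
    have := hEw.2.tsum_eq
    rw [← this]
    exact tsum_nonneg fun n => mul_nonneg (hw n) (pow_nonneg hx n)
  have hc : constantCoeff (1 - w) ≠ 0 := by
    rw [map_sub, map_one, ← coeff_zero_eq_constantCoeff_apply, h0]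
    norm_num
  set v := (1 - w)⁻¹ with hvdef
  have hinv : (1 - w) * v = 1 := PowerSeries.mul_inv_cancel _ hc
  have hv : v = 1 + w * v := by linear_combination hinv
  have hvpos : Pos v := by
    intro n
    induction n using Nat.strong_induction_on with
    | _ n ih =>
      have hcoeff : coeff n v = coeff n (1 : PowerSeries ℝ) + coeff n (w * v) := by
        conv_lhs => rw [hv]
        rw [map_add]
      rw [hcoeff]
      have h2 : 0 ≤ coeff n (w * v) := by
        rw [coeff_mul]
        refine Finset.sum_nonneg fun p hp => ?_
        rcases Nat.eq_zero_or_pos p.1 with h | h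
        · have : coeff p.1 w = 0 := by rw [h]; exact h0
          simp [this]
        · have hlt : p.2 < n := by
            rw [Finset.HasAntidiagonal.mem_antidiagonal] at hp; omega
          exact mul_nonneg (hw p.1) (ih p.2 hlt)
      linarith [Pos.one n]
  have hv0 : coeff 0 v = 1 := by
    conv_lhs => rw [hv]
    rw [map_add, coeff_mul]
    simp [h0, coeff_one]
  have honeb : ∀ N : ℕ, ∑ n ∈ range N, coeff n (1 : PowerSeries ℝ) * x ^ n ≤ 1 := by
    intro N
    calc ∑ n ∈ range N, coeff n (1 : PowerSeries ℝ) * x ^ n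
        = ∑ n ∈ range N, if n = 0 then x ^ n else 0 := by
          refine Finset.sum_congr rfl fun n _ => ?_
          rw [coeff_one]; split <;> simp
      _ ≤ 1 := by
          rw [Finset.sum_ite_eq' (range N) 0 (fun n => x ^ n)]
          split <;> norm_num
  have hVle : ∀ N, ∑ n ∈ range N, coeff n v * x ^ n ≤ 1/(1-s) := by
    intro N
    have hWN : ∑ n ∈ range N, coeff n w * x ^ n ≤ s := by
      rw [← hEw.2.tsum_eq]
      exact Summable.sum_le_tsum (range N) (fun n _ => mul_nonneg (hw n) (pow_nonneg hx n)) hEw.summable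
    have hVnn : 0 ≤ ∑ n ∈ range N, coeff n v * x ^ n :=
      Finset.sum_nonneg fun n _ => mul_nonneg (hvpos n) (pow_nonneg hx n)
    have hsplit : ∑ n ∈ range N, coeff n v * x ^ n
        = ∑ n ∈ range N, coeff n (1 : PowerSeries ℝ) * x ^ n
          + ∑ n ∈ range N, coeff n (w * v) * x ^ n := by
      rw [← Finset.sum_add_distrib]
      refine Finset.sum_congr rfl fun n _ => ?_
      conv_lhs => rw [hv]
      rw [map_add]; ring
    have hconv : ∑ n ∈ range N, coeff n (w * v) * x ^ n
        ≤ (∑ n ∈ range N, coeff n w * x ^ n) * (∑ n ∈ range N, coeff n v * x ^ n) :=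
      conv_partial_le hw hvpos hx N
    have hbound : ∑ n ∈ range N, coeff n v * x ^ n
        ≤ 1 + s * ∑ n ∈ range N, coeff n v * x ^ n := by
      have hm := mul_le_mul_of_nonneg_right hWN hVnn
      linarith [honeb N, hconv, hsplit]
    rw [le_div_iff₀ (by linarith : (0:ℝ) < 1 - s)]
    nlinarith
  have hvnn : ∀ n : ℕ, 0 ≤ coeff n v * x ^ n :=
    fun n => mul_nonneg (hvpos n) (pow_nonneg hx n)
  have hsumv : Summable fun n => coeff n v * x ^ n :=
    summable_of_sum_range_le hvnn hVle
  set V := ∑' n, coeff n v * x ^ n with hVdef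
  have hEvv : Ev v x V := Ev_pos_of_summable hvpos hx hsumv
  have hEv2 := (Ev.one (x := x)).add (hEw.mul hEvv)
  rw [← hv] at hEv2
  have hVeq : V = 1 + s * V := hEvv.unique hEv2
  have hVval : V = 1/(1-s) := by
    rw [eq_div_iff (by linarith : (1:ℝ) - s ≠ 0)]
    linarith
  exact ⟨hvpos, hVval ▸ hEvv, hv0⟩


lemma gc_pos {D : ℕ} (hD : 3 ≤ D) : 0 < (D:ℝ)^D / ((D:ℝ)+1)^(D+1) := by
  have h1 : (0:ℝ) < (D:ℝ) := by
    have : (3:ℝ) ≤ (D:ℝ) := by exact_mod_cast hD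
    linarith
  positivity

lemma fixed_unique {D : ℕ} (hD : 3 ≤ D) {x G1 G2 : ℝ} (hx : 0 ≤ x)
    (hxlt : x < (D:ℝ)^D / ((D:ℝ)+1)^(D+1))
    (h1a : 1 ≤ G1) (h1b : G1 ≤ ((D:ℝ)+1)/D) (h2a : 1 ≤ G2) (h2b : G2 ≤ ((D:ℝ)+1)/D)
    (e1 : G1 = 1 + x * G1 ^ (D+1)) (e2 : G2 = 1 + x * G2 ^ (D+1)) : G1 = G2 := by
  have hDr : (3:ℝ) ≤ (D:ℝ) := by exact_mod_cast hD
  have hD0 : (0:ℝ) < (D:ℝ) := by linarith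
  by_contra hne
  set R := ((D:ℝ)+1)/D with hR
  have hR1 : 1 ≤ R := by
    rw [hR, le_div_iff₀ hD0]; linarith
  have hfact := geom_sum₂_mul G1 G2 (D+1)
  simp only [Nat.add_sub_cancel] at hfact
  -- (∑ i in range (D+1), G1^i * G2^(D-i)) * (G1 - G2) = G1^(D+1) - G2^(D+1)
  have hdiff : G1 - G2 = x * (G1 ^ (D+1) - G2 ^ (D+1)) := by linarith [e1, e2]
  have hsum_le : ∑ i ∈ range (D+1), G1 ^ i * G2 ^ (D - i) ≤ ((D:ℝ)+1) * R ^ D := by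
    have : ∀ i ∈ range (D+1), G1 ^ i * G2 ^ (D - i) ≤ R ^ D := by
      intro i hi
      rw [Finset.mem_range] at hi
      have hiD : i ≤ D := by omega
      have b1 : G1 ^ i ≤ R ^ i := pow_le_pow_left₀ (by linarith) h1b i
      have b2 : G2 ^ (D - i) ≤ R ^ (D - i) := pow_le_pow_left₀ (by linarith) h2b _
      have p1 : (0:ℝ) ≤ G1 ^ i := pow_nonneg (by linarith) i
      have p2 : (0:ℝ) ≤ R ^ i := pow_nonneg (by linarith) i
      calc G1 ^ i * G2 ^ (D - i) ≤ R ^ i * R ^ (D - i) := by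
            apply mul_le_mul b1 b2 (pow_nonneg (by linarith) _) p2
        _ = R ^ D := by rw [← pow_add]; congr 1; omega
    calc ∑ i ∈ range (D+1), G1 ^ i * G2 ^ (D - i) ≤ ∑ _i ∈ range (D+1), R ^ D :=
          Finset.sum_le_sum this
      _ = ((D:ℝ)+1) * R ^ D := by
          rw [Finset.sum_const, Finset.card_range]; push_cast; ring
  have hsum_nonneg : 0 ≤ ∑ i ∈ range (D+1), G1 ^ i * G2 ^ (D - i) :=
    Finset.sum_nonneg fun i _ => mul_nonneg (pow_nonneg (by linarith) _) (pow_nonneg (by linarith) _)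
  have hone : 1 = x * ∑ i ∈ range (D+1), G1 ^ i * G2 ^ (D - i) := by
    have hsub : G1 - G2 ≠ 0 := sub_ne_zero.2 hne
    have : (G1 - G2) * 1 = (G1 - G2) * (x * ∑ i ∈ range (D+1), G1 ^ i * G2 ^ (D - i)) := by
      rw [mul_one]
      calc G1 - G2 = x * (G1 ^ (D+1) - G2 ^ (D+1)) := hdiff
        _ = x * ((∑ i ∈ range (D+1), G1 ^ i * G2 ^ (D - i)) * (G1 - G2)) := by
            rw [hfact]
        _ = (G1 - G2) * (x * ∑ i ∈ range (D+1), G1 ^ i * G2 ^ (D - i)) := by ring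
    exact mul_left_cancel₀ hsub this
  -- but x * sum < gc * (D+1) * R^D = 1
  have hkey : ((D:ℝ)^D / ((D:ℝ)+1)^(D+1)) * (((D:ℝ)+1) * R ^ D) = 1 := by
    rw [hR, div_pow]
    have hD1 : ((D:ℝ)+1) ≠ 0 := by linarith
    have hDne : (D:ℝ) ≠ 0 := by linarith
    field_simp
    ring
  have hRD : (0:ℝ) < ((D:ℝ)+1) * R ^ D := by positivity
  have hx_sum : x * ∑ i ∈ range (D+1), G1 ^ i * G2 ^ (D - i)
      ≤ x * (((D:ℝ)+1) * R ^ D) := mul_le_mul_of_nonneg_left hsum_le hx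
  have hlt : x * (((D:ℝ)+1) * R ^ D) < 1 := by
    calc x * (((D:ℝ)+1) * R ^ D) < ((D:ℝ)^D / ((D:ℝ)+1)^(D+1)) * (((D:ℝ)+1) * R ^ D) :=
          mul_lt_mul_of_pos_right hxlt hRD
      _ = 1 := hkey
  linarith

lemma G_lt_strict {D : ℕ} (hD : 3 ≤ D) {x G : ℝ} (hx : 0 ≤ x)
    (hxlt : x < (D:ℝ)^D / ((D:ℝ)+1)^(D+1))
    (hG1 : 1 ≤ G) (hGb : G ≤ ((D:ℝ)+1)/D) (e : G = 1 + x * G ^ (D+1)) :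
    G < ((D:ℝ)+1)/D := by
  have hDr : (3:ℝ) ≤ (D:ℝ) := by exact_mod_cast hD
  have hD0 : (0:ℝ) < (D:ℝ) := by linarith
  rcases lt_or_eq_of_le hGb with h | h
  · exact h
  · exfalso
    have hP : (0:ℝ) < (((D:ℝ)+1)/D) ^ (D+1) := by positivity
    have hgc : ((D:ℝ)^D / ((D:ℝ)+1)^(D+1)) * (((D:ℝ)+1)/D) ^ (D+1) = 1 / D := by
      rw [div_pow]
      have hD1 : ((D:ℝ)+1) ≠ 0 := by linarith
      have hDne : (D:ℝ) ≠ 0 := by linarith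
      rw [div_mul_div_comm, div_eq_div_iff (by positivity) hDne, pow_succ]
      ring
    have hxG : x * (((D:ℝ)+1)/D) ^ (D+1) = 1 / D := by
      have : ((D:ℝ)+1)/D = 1 + x * (((D:ℝ)+1)/D) ^ (D+1) := by rw [← h]; exact e
      have hd : ((D:ℝ)+1)/D - 1 = 1/D := by field_simp; ring
      linarith
    have : x * (((D:ℝ)+1)/D) ^ (D+1) < ((D:ℝ)^D / ((D:ℝ)+1)^(D+1)) * (((D:ℝ)+1)/D) ^ (D+1) :=
      mul_lt_mul_of_pos_right hxlt hP
    rw [hxG, hgc] at this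
    exact lt_irrefl _ this

lemma no_fixed {D : ℕ} (hD : 3 ≤ D) {t L : ℝ}
    (ht : (D:ℝ)^D / ((D:ℝ)+1)^(D+1) < t) (hL : 1 ≤ L) :
    L ≠ 1 + t * L ^ (D+1) := by
  intro he
  have hDr : (3:ℝ) ≤ (D:ℝ) := by exact_mod_cast hD
  have hD0 : (0:ℝ) < (D:ℝ) := by linarith
  have hD1 : (0:ℝ) < (D:ℝ)+1 := by linarith
  set m := (D:ℝ) * L / ((D:ℝ)+1) with hm
  have hm0 : 0 < m := by
    rw [hm]; positivity
  have hbern : 1 + ((D:ℝ)+1) * (m - 1) ≤ m ^ (D+1) := by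
    have := one_add_mul_le_pow (a := m - 1) (by linarith) (D+1)
    simpa [add_sub_cancel] using this
  have hLm : ((D:ℝ)+1) * m = (D:ℝ) * L := by
    rw [hm]; field_simp
  have hkey : ((D:ℝ)^D / ((D:ℝ)+1)^(D+1)) * L ^ (D+1) = m ^ (D+1) / D := by
    rw [hm, div_pow, mul_pow]
    have hD1' : ((D:ℝ)+1) ≠ 0 := by linarith
    have hDne : (D:ℝ) ≠ 0 := by linarith
    field_simp
    rw [pow_succ]
  have hLpow : (0:ℝ) < L ^ (D+1) := pow_pos (by linarith) _
  -- gc * L^{D+1} = m^{D+1}/D ≥ (1 + (D+1)(m-1))/D = ((D+1)m - D)/D = (D L - D)/D = L - 1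
  have h1 : ((D:ℝ)^D / ((D:ℝ)+1)^(D+1)) * L ^ (D+1) ≥ L - 1 := by
    rw [hkey, ge_iff_le, le_div_iff₀ hD0]
    nlinarith [hbern, hLm]
  have h2 : ((D:ℝ)^D / ((D:ℝ)+1)^(D+1)) * L ^ (D+1) < t * L ^ (D+1) :=
    mul_lt_mul_of_pos_right ht hLpow
  linarith


lemma Ev.zero {f : PowerSeries ℝ} : Ev f 0 (coeff 0 f) := by
  refine Ev.of_ite 0 fun n => ?_
  cases n with
  | zero => simp
  | succ m => simp

def kB (D : ℕ) : ℝ := (D:ℝ) * ((D:ℝ) + 1) / 2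

def w1 (D : ℕ) : PowerSeries ℝ := A D - 1

def w2 (D : ℕ) : PowerSeries ℝ := C (D:ℝ) * (X * (A D) ^ (D + 1))

def B (D : ℕ) : PowerSeries ℝ :=
  C (kB D) * (X ^ 2 * ((A D) ^ (2 * D + 2) * ((1 - w1 D)⁻¹ * (1 - w2 D)⁻¹)))

lemma Pos.w1p : Pos (w1 D) := by
  intro n
  rw [w1, map_sub]
  cases n with
  | zero => rw [coeff_A_zero, coeff_one]; norm_num
  | succ m => rw [coeff_one]; simp only [Nat.succ_ne_zero, if_false, sub_zero]; exact Pos.Ap _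

lemma coeff_w1_zero : coeff 0 (w1 D) = 0 := by
  rw [w1, map_sub, coeff_A_zero, coeff_one]; norm_num

lemma Pos.w2p : Pos (w2 D) := by
  have hD0 : (0:ℝ) ≤ (D:ℝ) := Nat.cast_nonneg D
  exact (Pos.Cp hD0).mul (Pos.Xp.mul (Pos.Ap.pow (D+1)))

lemma coeff_w2_zero : coeff 0 (w2 D) = 0 := by
  rw [w2, coeff_zero_eq_constantCoeff_apply, map_mul, map_mul, constantCoeff_X]
  ring

lemma coeff_A_pow_zero (m : ℕ) : coeff 0 ((A D) ^ m) = 1 := by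
  rw [coeff_zero_eq_constantCoeff_apply, map_pow, ← coeff_zero_eq_constantCoeff_apply,
    coeff_A_zero, one_pow]

lemma v1_pos : Pos ((1 - w1 D)⁻¹) ∧ coeff 0 ((1 - w1 D)⁻¹) = 1 := by
  have hEw : Ev (w1 D) 0 0 := by
    have := Ev.zero (f := w1 D)
    rwa [coeff_w1_zero] at this
  obtain ⟨h1, _, h3⟩ := geom_Ev Pos.w1p coeff_w1_zero le_rfl hEw (by norm_num)
  exact ⟨h1, h3⟩

lemma v2_pos : Pos ((1 - w2 D)⁻¹) ∧ coeff 0 ((1 - w2 D)⁻¹) = 1 := by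
  have hEw : Ev (w2 D) 0 0 := by
    have := Ev.zero (f := w2 D)
    rwa [coeff_w2_zero] at this
  obtain ⟨h1, _, h3⟩ := geom_Ev Pos.w2p coeff_w2_zero le_rfl hEw (by norm_num)
  exact ⟨h1, h3⟩

lemma Pos.Bp : Pos (B D) := by
  have hkB : (0:ℝ) ≤ kB D := by
    have : (0:ℝ) ≤ (D:ℝ) := Nat.cast_nonneg D
    rw [kB]; positivity
  exact (Pos.Cp hkB).mul ((Pos.Xp.pow 2).mul ((Pos.Ap.pow (2*D+2)).mul
    ((v1_pos).1.mul (v2_pos).1)))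

lemma master {D : ℕ} (hD : 3 ≤ D) {x G : ℝ} (hx : 0 ≤ x)
    (hxlt : x < (D:ℝ)^D / ((D:ℝ)+1)^(D+1)) (hG1 : 1 ≤ G) (hG2 : G ≤ ((D:ℝ)+1)/D)
    (hGeq : G = 1 + x * G ^ (D + 1)) :
    Ev (B D) x (kB D * x ^ 2 * G ^ (2 * D + 2) /
      ((2 - G) * (1 - x * (D:ℝ) * G ^ (D + 1)))) := by
  have hDr : (3:ℝ) ≤ (D:ℝ) := by exact_mod_cast hD
  have hD0 : (0:ℝ) < (D:ℝ) := by linarith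
  obtain ⟨L, hEvL, hL1, hLG, hLeq⟩ := Ev_A hx hG1 hGeq
  have hLG' : L = G := fixed_unique hD hx hxlt hL1 (hLG.trans hG2) hG1 hG2 hLeq hGeq
  have hEvA : Ev (A D) x G := hLG' ▸ hEvL
  have hGlt := G_lt_strict hD hx hxlt hG1 hG2 hGeq
  have hinvD : ((D:ℝ)+1)/D = 1 + 1/D := by field_simp
  have hs1 : G - 1 < 1 := by
    have h1D : 1/(D:ℝ) ≤ 1 := by rw [div_le_one hD0]; linarith
    rw [hinvD] at hGlt; linarith
  have hEw1 : Ev (w1 D) x (G - 1) := by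
    have := hEvA.sub (Ev.one (x := x))
    exact this
  obtain ⟨hPos1, hEv1, _⟩ := geom_Ev Pos.w1p coeff_w1_zero hx hEw1 hs1
  have hxg : x * G ^ (D+1) = G - 1 := by linarith
  have hs2 : (D:ℝ) * (x * G ^ (D+1)) < 1 := by
    rw [hxg]
    rw [hinvD] at hGlt
    have := mul_lt_mul_of_pos_left (show G - 1 < 1/D by linarith) hD0
    rw [mul_one_div, div_self (ne_of_gt hD0)] at this
    exact this
  have hEw2 : Ev (w2 D) x ((D:ℝ) * (x * G ^ (D+1))) :=
    Ev.Ce.mul (Ev.Xe.mul (hEvA.pow (D+1)))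
  obtain ⟨hPos2, hEv2, _⟩ := geom_Ev Pos.w2p coeff_w2_zero hx hEw2 hs2
  have hEvB := (Ev.Ce (c := kB D) (x := x)).mul (((Ev.Xe (x := x)).pow 2).mul
    ((hEvA.pow (2*D+2)).mul (hEv1.mul hEv2)))
  have hs2nn : 0 ≤ (D:ℝ) * (x * G ^ (D+1)) := by
    have : (0:ℝ) ≤ G ^ (D+1) := pow_nonneg (by linarith) _
    positivity
  have h2G : (0:ℝ) < 2 - G := by linarith
  have hd2 : (0:ℝ) < 1 - x * (D:ℝ) * G ^ (D+1) := by nlinarith [hs2]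
  have hval : kB D * (x ^ 2 * (G ^ (2*D+2) * (1/(1-(G-1)) * (1/(1 - (D:ℝ) * (x * G ^ (D+1)))))))
      = kB D * x ^ 2 * G ^ (2 * D + 2) / ((2 - G) * (1 - x * (D:ℝ) * G ^ (D + 1))) := by
    have e1 : (1:ℝ) - (G - 1) = 2 - G := by ring
    have e2 : (1:ℝ) - (D:ℝ) * (x * G ^ (D+1)) = 1 - x * (D:ℝ) * G ^ (D+1) := by ring
    rw [e1, e2]
    field_simp
  rw [← hval]
  exact hEvB

end

end NLOaux

open NLOaux

/-- Let `D ≥ 3`, `g_c := D^D/(D+1)^(D+1)`, `G_LO` the leading-order melonic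
2-point function, and for `0 ≤ g < g_c` let
`G_NLO(g) := (D(D+1)/2)·g²·G_LO(g)^(2D+2) / ((2 − G_LO(g))·(1 − g·D·G_LO(g)^(D+1)))`.
Then `G_NLO` is real-analytic on a neighbourhood of `0`, all coefficients of its Taylor series
at `0` are nonnegative, and the radius of convergence of this Taylor series is exactly `g_c`. -/
theorem nlo_two_point_radius_of_convergence (D : ℕ) (hD : 3 ≤ D) (G_LO G_NLO : ℝ → ℝ)
    (hG : ∀ g ∈ Set.Icc (0 : ℝ) ((D : ℝ) ^ D / ((D : ℝ) + 1) ^ (D + 1)),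
      G_LO g ∈ Set.Icc (1 : ℝ) (((D : ℝ) + 1) / D) ∧ G_LO g = 1 + g * (G_LO g) ^ (D + 1))
    (hN : ∀ g ∈ Set.Ico (0 : ℝ) ((D : ℝ) ^ D / ((D : ℝ) + 1) ^ (D + 1)),
      G_NLO g = ((D : ℝ) * ((D : ℝ) + 1) / 2) * g ^ 2 * (G_LO g) ^ (2 * D + 2) /
        ((2 - G_LO g) * (1 - g * D * (G_LO g) ^ (D + 1)))) :
    ∃ a : ℕ → ℝ,
      (∀ p : ℕ, 0 ≤ a p) ∧
      (∃ r : ℝ, 0 < r ∧ ∀ x ∈ Set.Ico (0 : ℝ) r,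
        HasSum (fun p : ℕ => a p * x ^ p) (G_NLO x)) ∧
      (∀ x : ℝ, |x| < (D : ℝ) ^ D / ((D : ℝ) + 1) ^ (D + 1) →
        Summable fun p : ℕ => a p * x ^ p) ∧
      (∀ x : ℝ, (D : ℝ) ^ D / ((D : ℝ) + 1) ^ (D + 1) < |x| →
        ¬ Summable fun p : ℕ => a p * x ^ p) := by
  have hDr : (3:ℝ) ≤ (D:ℝ) := by exact_mod_cast hD
  have hgc0 : 0 < (D:ℝ) ^ D / ((D:ℝ) + 1) ^ (D + 1) := gc_pos hD
  set b : ℕ → ℝ := fun p => coeff p (B D) with hbdef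
  have hbnn : ∀ p, 0 ≤ b p := fun p => Pos.Bp p
  -- master at a nonneg point below g_c
  have hmaster : ∀ x : ℝ, 0 ≤ x → x < (D:ℝ) ^ D / ((D:ℝ) + 1) ^ (D + 1) →
      Ev (B D) x (kB D * x ^ 2 * (G_LO x) ^ (2 * D + 2) /
        ((2 - G_LO x) * (1 - x * (D:ℝ) * (G_LO x) ^ (D + 1)))) := by
    intro x hx hxlt
    obtain ⟨hmem, heq⟩ := hG x ⟨hx, hxlt.le⟩
    exact master hD hx hxlt hmem.1 hmem.2 heq
  refine ⟨b, hbnn, ?_, ?_, ?_⟩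
  · -- HasSum on [0, g_c)
    refine ⟨(D:ℝ) ^ D / ((D:ℝ) + 1) ^ (D + 1), hgc0, ?_⟩
    intro x hx
    rw [hN x hx]
    exact (hmaster x hx.1 hx.2).2
  · -- summable for |x| < g_c
    intro x hxlt
    have hEv := hmaster |x| (abs_nonneg x) hxlt
    have hs := hEv.summable
    have habs : ∀ p, |b p * x ^ p| = b p * |x| ^ p := by
      intro p
      rw [abs_mul, abs_pow, abs_of_nonneg (hbnn p)]
    have : Summable fun p => |b p * x ^ p| := hs.congr fun p => (habs p).symm
    exact this.of_abs
  · -- not summable beyond g_c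
    intro x hxgt hS
    set t := |x| with htdef
    have ht0 : 0 < t := lt_trans hgc0 hxgt
    have habs : ∀ p, |b p * x ^ p| = b p * t ^ p := by
      intro p
      rw [abs_mul, abs_pow, abs_of_nonneg (hbnn p)]
    have hSt : Summable fun p => b p * t ^ p := hS.abs.congr habs
    have hshift : Summable fun p => b (p + 2) * t ^ (p + 2) :=
      (summable_nat_add_iff (f := fun p => b p * t ^ p) 2).mpr hSt
    -- coefficient comparison : kB D * coeff p (A D) ≤ b (p+2)
    have hkB : (0:ℝ) < kB D := by
      rw [kB]; nlinarith
    have hcoeff : ∀ p : ℕ, kB D * coeff p (A D) ≤ b (p + 2) := by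
      intro p
      have h1 : b (p + 2) = kB D * coeff p ((A D) ^ (2*D+2) * ((1 - w1 D)⁻¹ * (1 - w2 D)⁻¹)) := by
        rw [hbdef]
        show coeff (p+2) (B D) = _
        rw [B, coeff_C_mul, coeff_X_pow_mul]
      have h2 : coeff p (A D) ≤ coeff p ((A D) ^ (2*D+2)) := by
        have hpow : (A D) ^ (2*D+2) = A D * (A D) ^ (2*D+1) := by
          rw [← pow_succ']
        rw [hpow]
        refine le_coeff_mul Pos.Ap (Pos.Ap.pow (2*D+1)) ?_ p
        rw [coeff_A_pow_zero]
      have h3 : coeff p ((A D) ^ (2*D+2)) ≤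
          coeff p ((A D) ^ (2*D+2) * ((1 - w1 D)⁻¹ * (1 - w2 D)⁻¹)) := by
        refine le_coeff_mul (Pos.Ap.pow _) (v1_pos.1.mul v2_pos.1) ?_ p
        rw [coeff_zero_eq_constantCoeff_apply, map_mul,
          ← coeff_zero_eq_constantCoeff_apply, ← coeff_zero_eq_constantCoeff_apply (φ := (1 - w2 D)⁻¹),
          v1_pos.2, v2_pos.2]
        norm_num
      rw [h1]
      have := mul_le_mul_of_nonneg_left (h2.trans h3) hkB.le
      exact this
    have hsumA : Summable fun p => coeff p (A D) * t ^ p := by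
      have hcmp : Summable fun p => kB D * t ^ 2 * (coeff p (A D) * t ^ p) := by
        refine Summable.of_nonneg_of_le (fun p => ?_) (fun p => ?_) hshift
        · have := Pos.Ap (D := D) p
          positivity
        · have h1 := mul_le_mul_of_nonneg_right (hcoeff p) (pow_nonneg ht0.le (p+2))
          calc kB D * t ^ 2 * (coeff p (A D) * t ^ p)
              = kB D * coeff p (A D) * t ^ (p + 2) := by ring
            _ ≤ b (p + 2) * t ^ (p + 2) := h1
      have h2 := hcmp.mul_left ((kB D * t ^ 2)⁻¹)
      refine h2.congr fun p => ?_
      have hne : kB D * t ^ 2 ≠ 0 := by positivity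
      field_simp
    set L := ∑' p, coeff p (A D) * t ^ p with hLdef
    have hEvA : Ev (A D) t L := Ev_pos_of_summable Pos.Ap ht0.le hsumA
    have hL1 : 1 ≤ L := by
      have h1 := Summable.sum_le_tsum (range 1)
        (fun n _ => mul_nonneg (Pos.Ap n) (pow_nonneg ht0.le n)) hsumA
      simpa [coeff_A_zero] using h1
    have hfix : L = 1 + t * L ^ (D + 1) := by
      have hEv2 := (Ev.one (x := t)).add (Ev.Xe.mul (hEvA.pow (D+1)))
      rw [← A_fixed] at hEv2
      exact hEvA.unique hEv2
    exact no_fixed hD hxgt hL1 hfix
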